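/- Let t ≥ 1, let C_t be the set of t-good customers, let X ⊆ F hit every set S_c = {c} ∪ {good facilities for c} for c ∈ C_t, let C'' ⊆ C_t be the t-good customers not covered by X, and for each c ∈ C'' choose f_c ∈ X ∩ S_c with unique neighbor x_c on all shortest paths from c to f_c, and set F_c = {c} ∪ {f ∈ F : f ≠ c and every shortest path from c to f avoids x_c}. Then any hitting set Y of the family {F_c : c ∈ C''} is such that X ∪ Y is a setwise-disjoint cover of C_t. -/

import Mathlib

/-- `IsDiPath A a b p` asserts that the list of vertices `p` is a simple directed
path from `a` to `b` in the directed graph with arc relation `A`. -/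
def IsDiPath {V : Type*} (A : V → V → Prop) (a b : V) (p : List V) : Prop :=
  p.head? = some a ∧ p.getLast? = some b ∧ List.Chain' A p ∧ p.Nodup

/-- The arcs traversed by a path: the list of consecutive pairs of vertices. -/
def pathArcs {V : Type*} (p : List V) : List (V × V) :=
  p.zip p.tail

/-- The total weight of a path: the sum of the weights of its arcs. -/
def pathWeight {V : Type*} (w : V → V → ℝ) (p : List V) : ℝ :=
  ((p.zip p.tail).map fun e => w e.1 e.2).sum

/-- `p` is a shortest (minimum total weight) directed path from `a` to `b`. -/
def IsShortestDiPath {V : Type*} (A : V → V → Prop) (w : V → V → ℝ) (a b : V)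
    (p : List V) : Prop :=
  IsDiPath A a b p ∧ ∀ q, IsDiPath A a b q → pathWeight w p ≤ pathWeight w q

/-- The pair `{f₁, f₂}` covers `c` in a pathwise-disjoint fashion: there are shortest
paths from `c` to `f₁` and from `c` to `f₂` with no common vertex except `c`. -/
def CoversPathwise {V : Type*} (A : V → V → Prop) (w : V → V → ℝ) (c f₁ f₂ : V) : Prop :=
  ∃ p₁ p₂, IsShortestDiPath A w c f₁ p₁ ∧ IsShortestDiPath A w c f₂ p₂ ∧
    ∀ v ∈ p₁, v ∈ p₂ → v = c

/-- The pair `{f₁, f₂}` covers `c` in a setwise-disjoint fashion: no shortest path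
from `c` to `f₁` shares a vertex other than `c` with any shortest path from `c` to `f₂`. -/
def CoversSetwise {V : Type*} (A : V → V → Prop) (w : V → V → ℝ) (c f₁ f₂ : V) : Prop :=
  ∀ p₁ p₂, IsShortestDiPath A w c f₁ p₁ → IsShortestDiPath A w c f₂ p₂ →
    ∀ v ∈ p₁, v ∈ p₂ → v = c

/-- `F'` is a pathwise-disjoint cover for the customers `C` (facilities drawn from `F`). -/
def IsPathwiseCover {V : Type*} (A : V → V → Prop) (w : V → V → ℝ) (C F F' : Set V) : Prop :=
  F' ⊆ F ∧ ∀ c ∈ C, c ∉ F' → ∃ f₁ ∈ F', ∃ f₂ ∈ F', f₁ ≠ f₂ ∧ f₁ ≠ c ∧ f₂ ≠ c ∧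
    CoversPathwise A w c f₁ f₂

/-- `F'` is a setwise-disjoint cover for the customers `C` (facilities drawn from `F`). -/
def IsSetwiseCover {V : Type*} (A : V → V → Prop) (w : V → V → ℝ) (C F F' : Set V) : Prop :=
  F' ⊆ F ∧ ∀ c ∈ C, c ∉ F' → ∃ f₁ ∈ F', ∃ f₂ ∈ F', f₁ ≠ f₂ ∧ f₁ ≠ c ∧ f₂ ≠ c ∧
    CoversSetwise A w c f₁ f₂

/-- `spNbrs A w c f` : the set `N(c,f)` of out-neighbours `x` of `c` that lie on
some shortest path from `c` to `f`. -/
def spNbrs {V : Type*} (A : V → V → Prop) (w : V → V → ℝ) (c f : V) : Set V :=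
  {x | A c x ∧ ∃ p, IsShortestDiPath A w c f p ∧ x ∈ p}

/-- A facility `f` is *good* for a customer `c` if `f ≠ c` and `|N(c,f)| = 1`,
i.e. all shortest paths from `c` to `f` leave `c` via the same arc. -/
def GoodFor {V : Type*} (A : V → V → Prop) (w : V → V → ℝ) (F : Set V) (c f : V) : Prop :=
  f ∈ F ∧ f ≠ c ∧ (spNbrs A w c f).ncard = 1

/-- `C_t` : the set of `t`-good customers, i.e. customers with at least `t` good facilities. -/
def tGoodCustomers {V : Type*} (A : V → V → Prop) (w : V → V → ℝ) (C F : Set V) (t : ℕ) :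
    Set V :=
  {c ∈ C | t ≤ {f | GoodFor A w F c f}.ncard}

/-- `S_c` : the customer `c` together with all good facilities for `c`. -/
def Sgood {V : Type*} (A : V → V → Prop) (w : V → V → ℝ) (F : Set V) (c : V) : Set V :=
  {c} ∪ {f | GoodFor A w F c f}

/-- The customer `c` is covered by the set `X`: either `c ∈ X`, or some pair of
distinct facilities in `X - {c}` covers `c` in a setwise-disjoint fashion. -/
def CoveredBy {V : Type*} (A : V → V → Prop) (w : V → V → ℝ) (X : Set V) (c : V) : Prop :=
  c ∈ X ∨ ∃ f₁ ∈ X, ∃ f₂ ∈ X, f₁ ≠ f₂ ∧ f₁ ≠ c ∧ f₂ ≠ c ∧ CoversSetwise A w c f₁ f₂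

/-- `F_c` : the customer `c` together with all facilities `f ≠ c` all of whose
shortest paths from `c` avoid the vertex `x`. -/
def Favoid {V : Type*} (A : V → V → Prop) (w : V → V → ℝ) (F : Set V) (x c : V) : Set V :=
  {c} ∪ {f ∈ F | f ≠ c ∧ ∀ p, IsShortestDiPath A w c f p → x ∉ p}

@[simp] lemma pathWeight_nil {V : Type*} (w : V → V → ℝ) : pathWeight w [] = 0 := rfl
@[simp] lemma pathWeight_single {V : Type*} (w : V → V → ℝ) (a : V) : pathWeight w [a] = 0 := rfl
@[simp] lemma pathWeight_cons_cons {V : Type*} (w : V → V → ℝ) (a b : V) (l : List V) :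
    pathWeight w (a :: b :: l) = w a b + pathWeight w (b :: l) := rfl

lemma pathWeight_split {V : Type*} (w : V → V → ℝ) (v : V) :
    ∀ (s t : List V), pathWeight w (s ++ v :: t) = pathWeight w (s ++ [v]) + pathWeight w (v :: t)
  | [], t => by simp
  | [a], t => by simp
  | a :: b :: s, t => by
    have := pathWeight_split w v (b :: s) t
    simp only [List.cons_append, pathWeight_cons_cons] at *
    rw [this]; ring

lemma pathWeight_nonneg {V : Type*} {A : V → V → Prop} {w : V → V → ℝ}
    (hw : ∀ x y, A x y → 0 < w x y) :
    ∀ (l : List V), List.Chain' A l → 0 ≤ pathWeight w l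
  | [], _ => le_refl 0
  | [a], _ => le_refl 0
  | a :: b :: l, h => by
    rw [List.Chain', List.isChain_cons_cons] at h
    have := pathWeight_nonneg hw (b :: l) h.2
    have := hw a b h.1
    simp only [pathWeight_cons_cons]; linarith

lemma pathWeight_pos {V : Type*} {A : V → V → Prop} {w : V → V → ℝ}
    (hw : ∀ x y, A x y → 0 < w x y) (a b : V) (l : List V)
    (h : List.Chain' A (a :: b :: l)) : 0 < pathWeight w (a :: b :: l) := by
  rw [List.Chain', List.isChain_cons_cons] at h
  have := pathWeight_nonneg hw (b :: l) h.2
  have := hw a b h.1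
  simp only [pathWeight_cons_cons]; linarith

lemma exists_dup_split {V : Type*} :
    ∀ (l : List V), ¬ l.Nodup → ∃ (a : V) (l1 l2 l3 : List V), l = l1 ++ a :: l2 ++ a :: l3
  | [], h => absurd List.nodup_nil h
  | x :: xs, h => by
    by_cases hx : x ∈ xs
    · obtain ⟨l2, l3, rfl⟩ := List.append_of_mem hx
      exact ⟨x, [], l2, l3, rfl⟩
    · have : ¬ xs.Nodup := fun hn => h (List.nodup_cons.mpr ⟨hx, hn⟩)
      obtain ⟨a, l1, l2, l3, rfl⟩ := exists_dup_split xs this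
      exact ⟨a, x :: l1, l2, l3, rfl⟩

lemma head?_append_cons {V : Type*} (s : List V) (v : V) (t t' : List V) :
    (s ++ v :: t).head? = (s ++ v :: t').head? := by cases s <;> simp

lemma pathWeight_pos' {V : Type*} {A : V → V → Prop} {w : V → V → ℝ}
    (hw : ∀ x y, A x y → 0 < w x y) :
    ∀ (l : List V), List.Chain' A l → 2 ≤ l.length → 0 < pathWeight w l
  | a :: b :: l, h, _ => pathWeight_pos hw a b l h

lemma walk_to_path {V : Type*} {A : V → V → Prop} {w : V → V → ℝ}
    (hw : ∀ x y, A x y → 0 < w x y) :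
    ∀ (n : ℕ) (l : List V), l.length ≤ n → List.Chain' A l →
    ∃ p : List V, p.head? = l.head? ∧ p.getLast? = l.getLast? ∧ List.Chain' A p ∧ p.Nodup ∧
      pathWeight w p ≤ pathWeight w l ∧ (¬ l.Nodup → pathWeight w p < pathWeight w l) := by
  intro n
  induction n with
  | zero =>
    intro l hl _
    have : l = [] := List.length_eq_zero_iff.mp (Nat.le_zero.mp hl)
    subst this
    exact ⟨[], rfl, rfl, List.isChain_nil, List.nodup_nil, le_refl _, fun h => absurd List.nodup_nil h⟩
  | succ n ih =>
    intro l hl hc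
    by_cases hnd : l.Nodup
    · exact ⟨l, rfl, rfl, hc, hnd, le_refl _, fun h => absurd hnd h⟩
    · obtain ⟨a, l1, l2, l3, rfl⟩ := exists_dup_split l hnd
      have e : l1 ++ a :: l2 ++ a :: l3 = l1 ++ a :: (l2 ++ a :: l3) := by simp
      rw [e] at hl hc hnd ⊢
      rw [List.Chain', List.isChain_append] at hc
      obtain ⟨hcl1, hcmid, hjun⟩ := hc
      rw [← List.cons_append, List.isChain_append] at hcmid
      obtain ⟨hcal2, hcal3, hjun2⟩ := hcmid
      have hccyc : List.Chain' A ((a :: l2) ++ [a]) := by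
        rw [List.Chain', List.isChain_append]
        exact ⟨hcal2, List.isChain_singleton a, fun x hx y hy => by
          simp at hy; subst hy
          exact hjun2 x hx a (by simp)⟩
      have hc' : List.Chain' A (l1 ++ a :: l3) := by
        rw [List.Chain', List.isChain_append]
        refine ⟨hcl1, hcal3, fun x hx y hy => ?_⟩
        simp at hy; subst hy
        exact hjun x hx a (by simp)
      have hlen : (l1 ++ a :: l3).length ≤ n := by
        simp only [List.length_append, List.length_cons] at hl ⊢
        omega
      obtain ⟨p, hph, hpl, hpc, hpn, hple, -⟩ := ih (l1 ++ a :: l3) hlen hc'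
      have hw1 : pathWeight w (l1 ++ a :: (l2 ++ a :: l3)) =
          pathWeight w (l1 ++ [a]) + pathWeight w (a :: (l2 ++ a :: l3)) :=
        pathWeight_split w a l1 (l2 ++ a :: l3)
      have hw2 : pathWeight w (a :: (l2 ++ a :: l3)) =
          pathWeight w ((a :: l2) ++ [a]) + pathWeight w (a :: l3) := by
        have := pathWeight_split w a (a :: l2) l3
        simpa using this
      have hw3 : pathWeight w (l1 ++ a :: l3) =
          pathWeight w (l1 ++ [a]) + pathWeight w (a :: l3) :=
        pathWeight_split w a l1 l3
      have hcycpos : 0 < pathWeight w ((a :: l2) ++ [a]) :=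
        pathWeight_pos' hw _ hccyc (by simp)
      have hlt : pathWeight w (l1 ++ a :: l3) <
          pathWeight w (l1 ++ a :: (l2 ++ a :: l3)) := by
        rw [hw1, hw2, hw3]; linarith
      refine ⟨p, ?_, ?_, hpc, hpn, by linarith, fun _ => by linarith⟩
      · rw [hph]; exact head?_append_cons l1 a l3 (l2 ++ a :: l3)
      · rw [hpl, List.getLast?_append_cons]
        rw [show l1 ++ a :: (l2 ++ a :: l3) = (l1 ++ a :: l2) ++ a :: l3 by simp,
          List.getLast?_append_cons]

lemma key_disjoint {V : Type*} {A : V → V → Prop} {w : V → V → ℝ}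
    (hw : ∀ x y, A x y → 0 < w x y) (c g fcc x : V)
    (hfcne : fcc ≠ c)
    (hxc : spNbrs A w c fcc = {x})
    (hg : ∀ p, IsShortestDiPath A w c g p → x ∉ p) :
    CoversSetwise A w c fcc g := by
  intro p₁ p₂ hp₁ hp₂ v hv₁ hv₂
  by_contra hvc
  obtain ⟨⟨hd₁, hl₁, hch₁, hnd₁⟩, hmin₁⟩ := hp₁
  obtain ⟨⟨hd₂, hl₂, hch₂, hnd₂⟩, hmin₂⟩ := hp₂
  -- decompose p₁ at v
  obtain ⟨s, tl, hps⟩ := List.append_of_mem hv₁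
  obtain ⟨s₂, t₂, hps₂⟩ := List.append_of_mem hv₂
  -- second vertex of p₁ is x
  have hxmem : x ∈ s ++ [v] := by
    -- p₁ = c :: y :: rest with y = x
    have hch := hch₁
    rcases s with - | ⟨c0, s'⟩
    · exact absurd (by rw [hps] at hd₁; simpa using hd₁) hvc
    · have hc0 : c0 = c := by rw [hps] at hd₁; simpa using hd₁
      rcases s' with - | ⟨c1, s''⟩
      · have hAcv : A c0 v := by
          rw [hps] at hch; simp [List.Chain', List.isChain_cons_cons] at hch
          exact hch.1
        have : v ∈ spNbrs A w c fcc :=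
          ⟨hc0 ▸ hAcv, p₁, ⟨⟨hd₁, hl₁, hch₁, hnd₁⟩, hmin₁⟩, hv₁⟩
        rw [hxc] at this; simp at this; subst this; simp
      · have hAcv : A c0 c1 := by
          rw [hps] at hch; simp [List.Chain', List.isChain_cons_cons] at hch
          exact hch.1
        have hc1 : c1 ∈ p₁ := by rw [hps]; simp
        have : c1 ∈ spNbrs A w c fcc :=
          ⟨hc0 ▸ hAcv, p₁, ⟨⟨hd₁, hl₁, hch₁, hnd₁⟩, hmin₁⟩, hc1⟩
        rw [hxc] at this; simp at this; subst this; simp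
  -- chain decompositions
  have hch₁' := hch₁; rw [hps, List.Chain', List.isChain_append] at hch₁'
  obtain ⟨hcs, hcvt, hjs⟩ := hch₁'
  have hch₂' := hch₂; rw [hps₂, List.Chain', List.isChain_append] at hch₂'
  obtain ⟨hcs₂, hcvt₂, hjs₂⟩ := hch₂'
  -- W1 := s₂ ++ v :: tl is a walk from c to fcc
  have hcW1 : List.Chain' A (s₂ ++ v :: tl) := by
    rw [List.Chain', List.isChain_append]
    refine ⟨hcs₂, hcvt, fun a ha y hy => ?_⟩
    simp at hy; subst hy
    exact hjs₂ a ha v (by simp)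
  have hdW1 : (s₂ ++ v :: tl).head? = some c := by
    rw [head?_append_cons s₂ v tl t₂, ← hps₂]; exact hd₂
  have hlW1 : (s₂ ++ v :: tl).getLast? = some fcc := by
    rw [List.getLast?_append_cons, ← List.getLast?_append_cons s, ← hps]; exact hl₁
  -- extract path from W1, compare weights: w(s++[v]) ≤ w(s₂++[v])
  obtain ⟨q, hqh, hql, hqc, hqn, hqle, -⟩ :=
    walk_to_path hw (s₂ ++ v :: tl).length (s₂ ++ v :: tl) (le_refl _) hcW1
  have hq : IsDiPath A c fcc q := ⟨hqh.trans hdW1, hql.trans hlW1, hqc, hqn⟩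
  have h1 : pathWeight w p₁ ≤ pathWeight w (s₂ ++ v :: tl) := le_trans (hmin₁ q hq) hqle
  rw [hps, pathWeight_split w v s tl, pathWeight_split w v s₂ tl] at h1
  have hpref : pathWeight w (s ++ [v]) ≤ pathWeight w (s₂ ++ [v]) := by linarith
  -- W2 := s ++ v :: t₂ is a walk from c to g of weight ≤ w(p₂)
  have hcW2 : List.Chain' A (s ++ v :: t₂) := by
    rw [List.Chain', List.isChain_append]
    refine ⟨hcs, hcvt₂, fun a ha y hy => ?_⟩
    simp at hy; subst hy
    exact hjs a ha v (by simp)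
  have hdW2 : (s ++ v :: t₂).head? = some c := by
    rw [head?_append_cons s v t₂ tl, ← hps]; exact hd₁
  have hlW2 : (s ++ v :: t₂).getLast? = some g := by
    rw [List.getLast?_append_cons, ← List.getLast?_append_cons s₂, ← hps₂]; exact hl₂
  have hW2w : pathWeight w (s ++ v :: t₂) ≤ pathWeight w p₂ := by
    rw [hps₂, pathWeight_split w v s t₂, pathWeight_split w v s₂ t₂]
    linarith
  obtain ⟨q₂, hq₂h, hq₂l, hq₂c, hq₂n, hq₂le, hq₂lt⟩ :=
    walk_to_path hw (s ++ v :: t₂).length (s ++ v :: t₂) (le_refl _) hcW2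
  have hq₂ : IsDiPath A c g q₂ := ⟨hq₂h.trans hdW2, hq₂l.trans hlW2, hq₂c, hq₂n⟩
  have hq₂ge : pathWeight w p₂ ≤ pathWeight w q₂ := hmin₂ q₂ hq₂
  -- W2 must be nodup
  have hW2nd : (s ++ v :: t₂).Nodup := by
    by_contra hn
    have := hq₂lt hn
    linarith
  -- so W2 is a shortest path from c to g containing x: contradiction
  have hW2sp : IsShortestDiPath A w c g (s ++ v :: t₂) :=
    ⟨⟨hdW2, hlW2, hcW2, hW2nd⟩, fun r hr => le_trans hW2w (hmin₂ r hr)⟩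
  have hxW2 : x ∈ s ++ v :: t₂ := by
    rcases List.mem_append.mp hxmem with h | h
    · exact List.mem_append.mpr (Or.inl h)
    · simp at h; subst h; simp
  exact hg _ hW2sp hxW2

/-- Let `t ≥ 1`, let `X ⊆ F` hit every set `S_c` for `c` in the set
`C_t` of `t`-good customers, let `C''` be the `t`-good customers not covered by `X`,
and for `c ∈ C''` pick `f_c ∈ X ∩ S_c` with (unique) neighbour `x_c` on all shortest
paths from `c` to `f_c`. Then for any hitting set `Y ⊆ F` of the family
`{F_c : c ∈ C''}`, the set `X ∪ Y` is a setwise-disjoint cover of `C_t`. -/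
theorem dhs_union_of_hitting_sets_covers
    {V : Type*} [Fintype V] (A : V → V → Prop) (w : V → V → ℝ)
    (hw : ∀ x y, A x y → 0 < w x y) (hirr : ∀ v, ¬ A v v)
    (hconn : ∀ u v : V, ∃ p, IsDiPath A u v p)
    (C F : Set V) (hCF : C ⊆ F)
    (t : ℕ) (ht : 1 ≤ t)
    (X : Set V) (hXF : X ⊆ F)
    (hX : ∀ c ∈ tGoodCustomers A w C F t, (X ∩ Sgood A w F c).Nonempty)
    (C'' : Set V)
    (hC'' : C'' = {c ∈ tGoodCustomers A w C F t | ¬ CoveredBy A w X c})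
    (fc xc : V → V)
    (hfc : ∀ c ∈ C'', fc c ∈ X ∩ Sgood A w F c)
    (hxc : ∀ c ∈ C'', spNbrs A w c (fc c) = {xc c})
    (Y : Set V) (hYF : Y ⊆ F)
    (hY : ∀ c ∈ C'', (Y ∩ Favoid A w F (xc c) c).Nonempty) :
    IsSetwiseCover A w (tGoodCustomers A w C F t) F (X ∪ Y) := by
  refine ⟨Set.union_subset hXF hYF, ?_⟩
  intro c hct hcXY
  have hcX : c ∉ X := fun h => hcXY (Or.inl h)
  have hcY : c ∉ Y := fun h => hcXY (Or.inr h)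
  by_cases hcov : CoveredBy A w X c
  · rcases hcov with h | ⟨f₁, hf₁, f₂, hf₂, hne, hne₁, hne₂, hcov⟩
    · exact absurd h hcX
    · exact ⟨f₁, Or.inl hf₁, f₂, Or.inl hf₂, hne, hne₁, hne₂, hcov⟩
  · have hcC'' : c ∈ C'' := by rw [hC'']; exact ⟨hct, hcov⟩
    obtain ⟨hfcX, hfcS⟩ := hfc c hcC''
    have hfcne : fc c ≠ c := fun h => hcX (h ▸ hfcX)
    obtain ⟨g, hgY, hgFav⟩ := hY c hcC''
    have hgne : g ≠ c := fun h => hcY (h ▸ hgY)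
    have hgav : ∀ p, IsShortestDiPath A w c g p → xc c ∉ p := by
      rcases hgFav with h | ⟨-, -, h⟩
      · exact absurd (by simpa using h) hgne
      · exact h
    have hxcc := hxc c hcC''
    have hfcg : fc c ≠ g := by
      intro h
      have hx : xc c ∈ spNbrs A w c (fc c) := by rw [hxcc]; rfl
      obtain ⟨-, p, hp, hxp⟩ := hx
      exact hgav p (h ▸ hp) hxp
    exact ⟨fc c, Or.inl hfcX, g, Or.inr hgY, hfcg, hfcne, hgne,
      key_disjoint hw c g (fc c) (xc c) hfcne hxcc hgav⟩
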